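/- Discrete maximum principle: let f: V×[0,T) → ℝ be C¹ in t on a finite vertex set V with ∂f_i/∂t ≥ Σ_{j∼i} a_{ij}(f_j − f_i) + Φ(f_i) for all i and t, where a_{ij} ≥ 0 and Φ: ℝ → ℝ is locally Lipschitz and f_i(0) ≥ C₁ for all i. If φ solves φ' = Φ(φ), φ(0) = C₁ on [0,T), then f_i(t) ≥ φ(t) for all i ∈ V and t ∈ [0,T). -/

import Mathlib

open Finset

open Metric Set in
lemma locLip_compact {Φ : ℝ → ℝ} (hΦ : LocallyLipschitz Φ)
    {S : Set ℝ} (hS : IsCompact S) : ∃ K : NNReal, LipschitzOnWith K Φ S := by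
  have hc := hΦ.continuous
  choose K t ht hK using hΦ
  obtain ⟨F, hF⟩ := hS.elim_nhds_subcover (fun x => interior (t x))
    (fun x _ => interior_mem_nhds.2 (ht x))
  have hcover : S ⊆ ⋃ i : F, interior (t i) := by
    intro x hx
    obtain ⟨y, hyF, hy⟩ := Set.mem_iUnion₂.1 (hF.2 hx)
    exact Set.mem_iUnion.2 ⟨⟨y, hyF⟩, hy⟩
  obtain ⟨δ, hδ0, hδ⟩ := lebesgue_number_lemma_of_metric hS (fun _ => isOpen_interior) hcover
  obtain ⟨M, hM⟩ := hS.exists_bound_of_continuousOn hc.continuousOn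
  set M' : ℝ := max M 0 with hM'
  have hM'0 : 0 ≤ M' := le_max_right _ _
  set C : NNReal := Real.toNNReal (2 * M' / δ) with hC
  refine ⟨F.sup K ⊔ C, lipschitzOnWith_iff_dist_le_mul.2 fun u hu v hv => ?_⟩
  rcases lt_or_ge (dist u v) δ with h | h
  · obtain ⟨i, hi⟩ := hδ u hu
    have hu' : u ∈ t i := interior_subset (hi (mem_ball_self hδ0))
    have hv' : v ∈ t i := interior_subset (hi (by simpa [mem_ball, dist_comm] using h))
    calc dist (Φ u) (Φ v) ≤ K i * dist u v :=
          lipschitzOnWith_iff_dist_le_mul.1 (hK i) _ hu' _ hv'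
      _ ≤ (F.sup K ⊔ C : NNReal) * dist u v := by
          gcongr
          exact_mod_cast le_trans (Finset.le_sup i.2) (le_sup_left : F.sup K ≤ F.sup K ⊔ C)
  · have h1 : dist (Φ u) (Φ v) ≤ 2 * M' := by
      have hu1 := hM u hu
      have hv1 := hM v hv
      calc dist (Φ u) (Φ v) ≤ ‖Φ u‖ + ‖Φ v‖ := dist_le_norm_add_norm _ _
        _ ≤ M' + M' := by
            gcongr <;> exact le_trans (by assumption) (le_max_left _ _)
        _ = 2 * M' := by ring
    have h2 : (2 * M' / δ) * δ ≤ (C : ℝ) * dist u v := by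
      have hCge : (2 * M' / δ) ≤ (C : ℝ) := Real.le_coe_toNNReal _
      have hq : 0 ≤ (2 * M' / δ) := by positivity
      nlinarith [NNReal.coe_nonneg C]
    have h3 : (C : ℝ) * dist u v ≤ (F.sup K ⊔ C : NNReal) * dist u v := by
      gcongr
      exact_mod_cast (le_sup_right : C ≤ F.sup K ⊔ C)
    have h4 : 2 * M' = 2 * M' / δ * δ := by field_simp
    linarith


/-- Discrete maximum principle: if `∂f_i/∂t ≥ Σ_j a_{ij}(t)(f_j − f_i) + Φ(f_i)` with
nonnegative coefficients `a_{ij}(t) ≥ 0`, `Φ` locally Lipschitz, `f_i(0) ≥ C₁` for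
all `i`, and `φ` solves `φ' = Φ(φ)`, `φ(0) = C₁` on `[0,T)`, then `f_i(t) ≥ φ(t)` for
all `i` and `t ∈ [0,T)`. -/
theorem stmt13 {ι : Type*} [Fintype ι] (T : ℝ) (hT : 0 < T)
    (f : ι → ℝ → ℝ) (f' : ι → ℝ → ℝ) (a : ι → ι → ℝ → ℝ) (Φ : ℝ → ℝ)
    (ha : ∀ i j, ∀ t ∈ Set.Ico (0 : ℝ) T, 0 ≤ a i j t)
    (hΦ : LocallyLipschitz Φ)
    (hderiv : ∀ i, ∀ t ∈ Set.Ico (0 : ℝ) T, HasDerivAt (f i) (f' i t) t)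
    (hineq : ∀ i, ∀ t ∈ Set.Ico (0 : ℝ) T,
      (∑ j, a i j t * (f j t - f i t)) + Φ (f i t) ≤ f' i t)
    (C₁ : ℝ) (hinit : ∀ i, C₁ ≤ f i 0)
    (φ : ℝ → ℝ) (hφderiv : ∀ t ∈ Set.Ico (0 : ℝ) T, HasDerivAt φ (Φ (φ t)) t)
    (hφ0 : φ 0 = C₁) :
    ∀ i, ∀ t ∈ Set.Ico (0 : ℝ) T, φ t ≤ f i t := by
  intro i t ht
  obtain ⟨ht0, htT⟩ := ht
  have hsub : Set.Icc (0:ℝ) t ⊆ Set.Ico 0 T := fun u hu => ⟨hu.1, lt_of_le_of_lt hu.2 htT⟩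
  have hcf : ∀ j, ContinuousOn (f j) (Set.Icc 0 t) := fun j u hu =>
    ((hderiv j u (hsub hu)).continuousAt).continuousWithinAt
  have hcφ : ContinuousOn φ (Set.Icc 0 t) := fun u hu =>
    ((hφderiv u (hsub hu)).continuousAt).continuousWithinAt
  have hScomp : IsCompact ((φ '' Set.Icc 0 t) ∪ ⋃ j, f j '' Set.Icc 0 t) :=
    ((isCompact_Icc).image_of_continuousOn hcφ).union
      (isCompact_iUnion fun j => (isCompact_Icc).image_of_continuousOn (hcf j))
  obtain ⟨K, hK⟩ := locLip_compact hΦ hScomp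
  set K' : ℝ := (K:ℝ) + 1 with hK'def
  have key : ∀ ε : ℝ, 0 < ε → φ t - ε * Real.exp (K' * t) ≤ f i t := by
    intro ε hε
    set g : ι → ℝ → ℝ := fun j u => f j u - φ u + ε * Real.exp (K' * u) with hg
    have hgd : ∀ j, ∀ s ∈ Set.Icc (0:ℝ) t,
        HasDerivAt (g j) (f' j s - Φ (φ s) + ε * K' * Real.exp (K' * s)) s := by
      intro j s hs
      have h1 := hderiv j s (hsub hs)
      have h2 := hφderiv s (hsub hs)
      have h4 : HasDerivAt (fun u : ℝ => K' * u) K' s := by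
        simpa using (hasDerivAt_id s).const_mul K'
      have h5 := (h4.exp).const_mul ε
      have h3 : HasDerivAt (fun u : ℝ => ε * Real.exp (K' * u))
          (ε * K' * Real.exp (K' * s)) s := by
        rw [show ε * K' * Real.exp (K' * s) = ε * (Real.exp (K' * s) * K') by ring]; exact h5
      exact (h1.sub h2).add h3
    set A : Set ℝ := {s | s ∈ Set.Icc (0:ℝ) t ∧ ∀ u ∈ Set.Icc (0:ℝ) s, ∀ j, 0 ≤ g j u}
      with hA
    have h0A : (0:ℝ) ∈ A := by
      refine ⟨⟨le_refl 0, ht0⟩, fun u hu j => ?_⟩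
      have hu0 : u = 0 := le_antisymm hu.2 hu.1
      subst hu0
      show 0 ≤ f j 0 - φ 0 + ε * Real.exp (K' * 0)
      rw [hφ0, mul_zero, Real.exp_zero]
      linarith [hinit j]
    have hbdd : BddAbove A := BddAbove.mono (fun s hs => hs.1) bddAbove_Icc
    have hAne : A.Nonempty := ⟨0, h0A⟩
    set σ : ℝ := sSup A with hσdef
    have hσ0 : 0 ≤ σ := le_csSup hbdd h0A
    have hσt : σ ≤ t := csSup_le hAne fun s hs => hs.1.2
    have hσIcc : σ ∈ Set.Icc (0:ℝ) t := ⟨hσ0, hσt⟩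
    have hbelow : ∀ u, 0 ≤ u → u < σ → ∀ j, 0 ≤ g j u := by
      intro u hu0 huσ j
      obtain ⟨s, hsA, hus⟩ := exists_lt_of_lt_csSup hAne huσ
      exact hsA.2 u ⟨hu0, le_of_lt hus⟩ j
    have hgσ : ∀ j, 0 ≤ g j σ := by
      intro j
      rcases eq_or_lt_of_le hσ0 with h0 | h0
      · rw [← h0]; exact h0A.2 0 ⟨le_refl 0, le_refl 0⟩ j
      · have hcont : ContinuousAt (g j) σ := (hgd j σ hσIcc).continuousAt
        have htend : Filter.Tendsto (g j) (nhdsWithin σ (Set.Iio σ)) (nhds (g j σ)) :=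
          hcont.tendsto.mono_left nhdsWithin_le_nhds
        refine ge_of_tendsto htend ?_
        have h1 : ∀ᶠ u in nhdsWithin σ (Set.Iio σ), 0 < u :=
          eventually_nhdsWithin_of_eventually_nhds (eventually_gt_nhds h0)
        have h2 : ∀ᶠ u in nhdsWithin σ (Set.Iio σ), u < σ :=
          eventually_mem_nhdsWithin.mono (fun u hu => hu)
        filter_upwards [h1, h2] with u hu1 hu2
        exact hbelow u (le_of_lt hu1) hu2 j
    have hσA : σ ∈ A :=
      ⟨hσIcc, fun u hu j => (lt_or_eq_of_le hu.2).elim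
        (fun h => hbelow u hu.1 h j) (fun h => h ▸ hgσ j)⟩
    have hσeq : σ = t := by
      by_contra hne
      have hσlt : σ < t := lt_of_le_of_ne hσt hne
      have hσT : σ ∈ Set.Ico (0:ℝ) T := hsub hσIcc
      have hstep : ∀ j, ∀ᶠ u in nhdsWithin σ (Set.Ioi σ), 0 ≤ g j u := by
        intro j
        rcases eq_or_lt_of_le (hgσ j) with h0 | h0
        · -- g j σ = 0
          have h0' : f j σ - φ σ + ε * Real.exp (K' * σ) = 0 := h0.symm
          have hfj : f j σ = φ σ - ε * Real.exp (K' * σ) := by linarith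
          have hmin : ∀ k, f j σ ≤ f k σ := by
            intro k
            have hk : 0 ≤ f k σ - φ σ + ε * Real.exp (K' * σ) := hgσ k
            linarith
          have hsum : 0 ≤ ∑ k, a j k σ * (f k σ - f j σ) :=
            Finset.sum_nonneg fun k _ => mul_nonneg (ha j k σ hσT) (by linarith [hmin k])
          have hLip : |Φ (f j σ) - Φ (φ σ)| ≤ (K:ℝ) * (ε * Real.exp (K' * σ)) := by
            have hmem1 : f j σ ∈ (φ '' Set.Icc 0 t) ∪ ⋃ j, f j '' Set.Icc 0 t :=
              Or.inr (Set.mem_iUnion.2 ⟨j, Set.mem_image_of_mem _ hσIcc⟩)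
            have hmem2 : φ σ ∈ (φ '' Set.Icc 0 t) ∪ ⋃ j, f j '' Set.Icc 0 t :=
              Or.inl (Set.mem_image_of_mem _ hσIcc)
            have hd := lipschitzOnWith_iff_dist_le_mul.1 hK _ hmem1 _ hmem2
            rw [Real.dist_eq, Real.dist_eq] at hd
            have habs : |f j σ - φ σ| = ε * Real.exp (K' * σ) := by
              have : f j σ - φ σ = -(ε * Real.exp (K' * σ)) := by rw [hfj]; ring
              rw [this, abs_neg, abs_of_nonneg (by positivity)]
            rw [habs] at hd
            exact hd
          have hexp : 0 < Real.exp (K' * σ) := Real.exp_pos _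
          have hd : 0 < f' j σ - Φ (φ σ) + ε * K' * Real.exp (K' * σ) := by
            have h1 := hineq j σ hσT
            have h2 : -((K:ℝ) * (ε * Real.exp (K' * σ))) ≤ Φ (f j σ) - Φ (φ σ) :=
              (abs_le.1 hLip).1
            have h3 : ε * K' * Real.exp (K' * σ)
                - (K:ℝ) * (ε * Real.exp (K' * σ)) = ε * Real.exp (K' * σ) := by
              rw [hK'def]; ring
            nlinarith [mul_pos hε hexp]
          have hslope := hasDerivAt_iff_tendsto_slope.1 (hgd j σ hσIcc)
          have hev : ∀ᶠ u in nhdsWithin σ {σ}ᶜ, 0 < slope (g j) σ u :=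
            hslope.eventually (eventually_gt_nhds hd)
          have hmono : nhdsWithin σ (Set.Ioi σ) ≤ nhdsWithin σ {σ}ᶜ :=
            nhdsWithin_mono σ fun u hu => Set.mem_compl_singleton_iff.2 (ne_of_gt (Set.mem_Ioi.1 hu))
          have hev2 : ∀ᶠ u in nhdsWithin σ (Set.Ioi σ), 0 < slope (g j) σ u :=
            hev.filter_mono hmono
          filter_upwards [hev2, eventually_mem_nhdsWithin] with u hu1 hu2
          have huσ : 0 < u - σ := sub_pos.2 hu2
          rw [slope_def_field, ← h0, sub_zero] at hu1
          rcases div_pos_iff.1 hu1 with ⟨h, _⟩ | ⟨_, h⟩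
          · exact le_of_lt h
          · linarith
        · have hcont : ContinuousAt (g j) σ := (hgd j σ hσIcc).continuousAt
          exact eventually_nhdsWithin_of_eventually_nhds
            ((hcont.tendsto.eventually (eventually_gt_nhds h0)).mono fun u hu => le_of_lt hu)
      have hall : ∀ᶠ u in nhdsWithin σ (Set.Ioi σ), (∀ j, 0 ≤ g j u) ∧ u < t :=
        (Filter.eventually_all.2 hstep).and
          (eventually_nhdsWithin_of_eventually_nhds (eventually_lt_nhds hσlt))
      obtain ⟨s', hs'Ioi, hs'sub⟩ := mem_nhdsGT_iff_exists_Ioc_subset.1 hall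
      have hs'P := hs'sub (Set.right_mem_Ioc.2 hs'Ioi)
      have hs'A : s' ∈ A := by
        refine ⟨⟨le_trans hσ0 (le_of_lt hs'Ioi), le_of_lt hs'P.2⟩, fun u hu j => ?_⟩
        rcases le_or_gt u σ with h | h
        · exact hσA.2 u ⟨hu.1, h⟩ j
        · exact (hs'sub ⟨h, hu.2⟩).1 j
      exact absurd (le_csSup hbdd hs'A) (not_le.2 hs'Ioi)
    have htA : t ∈ A := hσeq ▸ hσA
    have hgi : 0 ≤ f i t - φ t + ε * Real.exp (K' * t) := htA.2 t ⟨ht0, le_refl t⟩ i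
    linarith
  refine le_of_forall_pos_le_add fun η hη => ?_
  have hexp : 0 < Real.exp (K' * t) := Real.exp_pos _
  have h := key (η / Real.exp (K' * t)) (by positivity)
  have hcanc : η / Real.exp (K' * t) * Real.exp (K' * t) = η :=
    div_mul_cancel₀ _ (ne_of_gt hexp)
  linarith
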